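/- Let k = 2, m ≥ 1, and let R be a symmetric m×m integer matrix. For all a, b ∈ {0,1}^m and all v ∈ {0,1}^m, the quantity q^{(1)}(v; R, a, b) := (1 − 2^{k−2}) a R a^T + (2 + 2^{k−1}) v R a^T − 4 η(v; R, a) (with k = 2, so = 0·aRa^T + 4 v R a^T − 4η(v;R,a)) satisfies q^{(1)}(v; R, a, b) ≡ 0 (mod 4). Consequently τ_R^{(2)} E(a,b) (τ_R^{(2)})^† = E(a, b + aR), where the second argument b + aR is an integer row vector. -/
import Mathlib


open Complex Matrix

namespace CliffordHierarchy

noncomputable section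

variable {ι : Type*} [Fintype ι] [DecidableEq ι]

/-- Embed a binary vector (entries in `ZMod 2`) into ℤ as a 0/1 vector. -/
def toZ (v : ι → ZMod 2) : ι → ℤ := fun i => ((v i).val : ℤ)

/-- Reduce an integer vector mod 2, viewed in `ZMod 2`. -/
def red2 (a : ι → ℤ) : ι → ZMod 2 := fun i => ((a i : ZMod 2))

/-- Dot product of integer row vectors, over ℤ. -/
def dotZ (x y : ι → ℤ) : ℤ := ∑ i, x i * y i

/-- Bilinear form `x R yᵀ` over ℤ. -/
def bil (R : Matrix ι ι ℤ) (x y : ι → ℤ) : ℤ := ∑ i, ∑ j, x i * R i j * y j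

/-- η(v; R, w) = [(v + w) − (v ∗ w)] R (v ∗ w)ᵀ, with ∗ the entrywise product. -/
def eta (R : Matrix ι ι ℤ) (v w : ι → ℤ) : ℤ := bil R (v + w - v * w) (v * w)

/-- bitwise XOR of 0/1 integer vectors, re-embedded as a 0/1 integer vector. -/
def vxor (v w : ι → ℤ) : ι → ℤ := fun i => v i + w i - 2 * (v i * w i)

/-- ξ_k = exp(2πi/2^k). -/
def xi (k : ℕ) : ℂ := Complex.exp (2 * Real.pi * Complex.I / 2 ^ k)

/-- τ_R^{(k)} = diag(ξ^{v R vᵀ mod 2^k}), indexed by v ∈ {0,1}^m. -/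
def tau (k : ℕ) (R : Matrix ι ι ℤ) : Matrix (ι → ZMod 2) (ι → ZMod 2) ℂ :=
  Matrix.diagonal fun v => xi k ^ (bil R (toZ v) (toZ v) % 2 ^ k)

/-- The Hermitian Pauli matrix E(a,b) extended to integer-vector arguments:
    E(a,b) e_v = i^{a·b mod 4} (−1)^{v·b} e_{v ⊕ a₀}. -/
def EMat (a b : ι → ℤ) : Matrix (ι → ZMod 2) (ι → ZMod 2) ℂ :=
  Matrix.of fun u v =>
    if u = v + red2 a then Complex.I ^ (dotZ a b % 4) * (-1 : ℂ) ^ dotZ (toZ v) b else 0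

/-- 0th binary digit vector of a (componentwise `mod 2`). -/
def dig0 (a : ι → ℤ) : ι → ℤ := fun i => a i % 2

/-- 1st binary digit vector of a. -/
def dig1 (a : ι → ℤ) : ι → ℤ := fun i => (a i / 2) % 2

/-- q^{(k−1)}(v; R, a, b). -/
def qfun (k : ℕ) (R : Matrix ι ι ℤ) (a b v : ι → ℤ) : ℤ :=
  (1 - 2 ^ (k - 2)) * bil R (dig0 a) (dig0 a)
    + 2 ^ (k - 1) * (dotZ (dig0 a) (dig1 b) + dotZ (dig0 b) (dig1 a))
    + (2 + 2 ^ (k - 1)) * bil R v (dig0 a) - 4 * eta R v (dig0 a)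



-- auxiliary lemmas to test
lemma xi_two : xi 2 = Complex.I := by
  unfold xi
  have : (2 * (Real.pi:ℂ) * Complex.I / 2 ^ 2) = (Real.pi/2 : ℂ) * Complex.I := by ring
  rw [this, Complex.exp_mul_I]
  norm_num [← Complex.ofReal_div, Complex.cos_pi_div_two, Complex.sin_pi_div_two]

lemma I_zpow_congr {n m : ℤ} (h : n ≡ m [ZMOD 4]) : Complex.I ^ n = Complex.I ^ m := by
  obtain ⟨k, hk⟩ := h.dvd
  have hm : m = n + 4 * k := by linarith
  have h4 : Complex.I ^ (4:ℤ) = 1 := by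
    rw [show (4:ℤ) = ((4:ℕ):ℤ) from rfl, zpow_natCast]; exact Complex.I_pow_four
  rw [hm, zpow_add₀ Complex.I_ne_zero, _root_.zpow_mul, h4, _root_.one_zpow, mul_one]

lemma star_I_zpow (n : ℤ) : star (Complex.I ^ n) = Complex.I ^ (-n) := by
  rw [star_zpow₀, Complex.star_def, Complex.conj_I, ← Complex.inv_I, _root_.inv_zpow, ← _root_.zpow_neg]

lemma neg_one_zpow_eq (n : ℤ) : (-1 : ℂ) ^ n = Complex.I ^ (2 * n) := by
  have h2 : Complex.I ^ (2:ℤ) = -1 := by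
    rw [show (2:ℤ) = ((2:ℕ):ℤ) from rfl, zpow_natCast]; exact Complex.I_sq
  rw [_root_.zpow_mul, h2]

lemma bil_add_left (R : Matrix ι ι ℤ) (x y z : ι → ℤ) :
    bil R (x + y) z = bil R x z + bil R y z := by
  simp [bil, add_mul, Finset.sum_add_distrib]

lemma bil_sub_left (R : Matrix ι ι ℤ) (x y z : ι → ℤ) :
    bil R (x - y) z = bil R x z - bil R y z := by
  simp [bil, sub_mul, Finset.sum_sub_distrib]

lemma bil_add_right (R : Matrix ι ι ℤ) (x y z : ι → ℤ) :
    bil R x (y + z) = bil R x y + bil R x z := by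
  simp [bil, mul_add, Finset.sum_add_distrib]

lemma bil_sub_right (R : Matrix ι ι ℤ) (x y z : ι → ℤ) :
    bil R x (y - z) = bil R x y - bil R x z := by
  simp [bil, mul_sub, Finset.sum_sub_distrib]

lemma bil_symm {R : Matrix ι ι ℤ} (hR : R.IsSymm) (x y : ι → ℤ) :
    bil R x y = bil R y x := by
  unfold bil
  rw [Finset.sum_comm]
  refine Finset.sum_congr rfl fun i _ => Finset.sum_congr rfl fun j _ => ?_
  rw [← hR.apply i j]
  ring

lemma vxor_eq (x a : ι → ℤ) : vxor x a = x + a - x * a - x * a := by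
  funext i; simp [vxor]; ring

lemma dotZ_add_right (x y z : ι → ℤ) : dotZ x (y + z) = dotZ x y + dotZ x z := by
  simp [dotZ, mul_add, Finset.sum_add_distrib]

lemma dotZ_vecMul (R : Matrix ι ι ℤ) (p a : ι → ℤ) :
    dotZ p (Matrix.vecMul a R) = bil R a p := by
  unfold dotZ bil Matrix.vecMul dotProduct
  rw [Finset.sum_comm]
  refine Finset.sum_congr rfl fun j _ => ?_
  rw [Finset.mul_sum]
  refine Finset.sum_congr rfl fun i _ => ?_
  ring

lemma toZ_add_red2 (w : ι → ZMod 2) (a : ι → ℤ) (ha : ∀ i, a i = 0 ∨ a i = 1) :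
    toZ (w + red2 a) = vxor (toZ w) a := by
  funext i
  have hz : ∀ z : ZMod 2, z = 0 ∨ z = 1 := by decide
  rcases ha i with h | h <;> rcases hz (w i) with hw | hw <;>
    · simp only [toZ, vxor, Pi.add_apply, red2, h, hw]
      decide


theorem stmt4 {m : ℕ} (hm : 1 ≤ m)
    (R : Matrix (Fin m) (Fin m) ℤ) (hR : R.IsSymm)
    (a b : Fin m → ℤ) (ha : ∀ i, a i = 0 ∨ a i = 1) (hb : ∀ i, b i = 0 ∨ b i = 1) :
    (∀ v : Fin m → ℤ, (∀ i, v i = 0 ∨ v i = 1) →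
        ((1 - (2 : ℤ) ^ (2 - 2)) * bil R a a + (2 + 2 ^ (2 - 1)) * bil R v a - 4 * eta R v a)
          ≡ 0 [ZMOD 4])
    ∧ tau 2 R * EMat a b * (tau 2 R)ᴴ = EMat a (b + Matrix.vecMul a R) := by
  constructor
  · intro v hv
    have h4 : (1 - (2 : ℤ) ^ (2 - 2)) * bil R a a + (2 + 2 ^ (2 - 1)) * bil R v a
        - 4 * eta R v a = 4 * (bil R v a - eta R v a) := by norm_num; ring
    rw [h4]
    exact Int.modEq_zero_iff_dvd.mpr ⟨_, rfl⟩
  · have htau : tau 2 R = Matrix.diagonal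
        (fun v : Fin m → ZMod 2 => Complex.I ^ (bil R (toZ v) (toZ v) % 4)) := by
      unfold tau; rw [xi_two]; norm_num
    ext u w
    rw [htau, Matrix.diagonal_conjTranspose]
    simp only [Matrix.mul_diagonal, Matrix.diagonal_mul, Pi.star_apply, EMat, Matrix.of_apply]
    by_cases h : u = w + red2 a
    · subst h
      simp only [if_pos rfl, if_true, eq_self_iff_true, toZ_add_red2 w a ha]
      set x := toZ w with hx
      rw [star_I_zpow, neg_one_zpow_eq, neg_one_zpow_eq,
        ← zpow_add₀ Complex.I_ne_zero, ← zpow_add₀ Complex.I_ne_zero,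
        ← zpow_add₀ Complex.I_ne_zero, ← zpow_add₀ Complex.I_ne_zero]
      apply I_zpow_congr
      have hdb' : dotZ a (b + Matrix.vecMul a R) = dotZ a b + bil R a a := by
        rw [dotZ_add_right, dotZ_vecMul]
      have hdx' : dotZ x (b + Matrix.vecMul a R) = dotZ x b + bil R a x := by
        rw [dotZ_add_right, dotZ_vecMul]
      have hexp : bil R (vxor x a) (vxor x a)
          = bil R x x + bil R a a + 2 * bil R a x
            + 4 * (bil R (x*a) (x*a) - bil R x (x*a) - bil R a (x*a)) := by
        rw [vxor_eq]
        simp only [bil_add_left, bil_add_right, bil_sub_left, bil_sub_right]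
        rw [bil_symm hR x a, bil_symm hR (x*a) x, bil_symm hR (x*a) a]
        ring
      rw [hexp, hdb', hdx']
      show _ % (4:ℤ) = _ % (4:ℤ)
      omega
    · simp [h]


end

end CliffordHierarchy
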